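/- Let ‖·‖ be a norm on ℝⁿ whose square is C² away from the origin, and for ε > 0 define ‖x‖_{(ε)} = sqrt(‖x‖² + ε‖x‖₂²). Then ‖·‖_{(ε)} is a norm on ℝⁿ, its square is C² away from the origin, and its second differential (the Hessian of x ↦ ½‖x‖_{(ε)}²) is positive definite at every nonzero point. -/

import Mathlib

set_option maxHeartbeats 1000000

open Set Filter Topology

private lemma mono_deriv_nonneg {m : ℝ → ℝ} {U : Set ℝ} (hU : U ∈ 𝓝 (0:ℝ))
    (hm : MonotoneOn m U) {a : ℝ} (hd : HasDerivAt m a 0) : 0 ≤ a := by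
  have h0 : (0:ℝ) ∈ U := mem_of_mem_nhds hU
  refine ge_of_tendsto (hasDerivAt_iff_tendsto_slope.mp hd) ?_
  filter_upwards [mem_nhdsWithin_of_mem_nhds hU, self_mem_nhdsWithin] with t htU ht0
  have ht0' : t ≠ 0 := ht0
  rw [slope_def_field]
  rcases lt_or_gt_of_ne ht0' with h | h
  · have h1 : m t ≤ m 0 := hm htU h0 h.le
    exact div_nonneg_iff.mpr (Or.inr ⟨by linarith, by linarith⟩)
  · have h1 : m 0 ≤ m t := hm h0 htU h.le
    apply div_nonneg <;> linarith

theorem stmt19 (n : ℕ) (N : EuclideanSpace ℝ (Fin n) → ℝ)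
    (hN0 : ∀ x, N x = 0 ↔ x = 0)
    (hNs : ∀ (c : ℝ) x, N (c • x) = |c| * N x)
    (hNt : ∀ x y, N (x + y) ≤ N x + N y)
    (hNsm : ContDiffOn ℝ 2 (fun x => N x ^ 2) {(0 : EuclideanSpace ℝ (Fin n))}ᶜ)
    (ε : ℝ) (hε : 0 < ε) :
    (∀ x, Real.sqrt (N x ^ 2 + ε * ‖x‖ ^ 2) = 0 ↔ x = 0) ∧
    (∀ (c : ℝ) x, Real.sqrt (N (c • x) ^ 2 + ε * ‖c • x‖ ^ 2) =
      |c| * Real.sqrt (N x ^ 2 + ε * ‖x‖ ^ 2)) ∧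
    (∀ x y, Real.sqrt (N (x + y) ^ 2 + ε * ‖x + y‖ ^ 2) ≤
      Real.sqrt (N x ^ 2 + ε * ‖x‖ ^ 2) + Real.sqrt (N y ^ 2 + ε * ‖y‖ ^ 2)) ∧
    ContDiffOn ℝ 2 (fun x => Real.sqrt (N x ^ 2 + ε * ‖x‖ ^ 2) ^ 2)
      {(0 : EuclideanSpace ℝ (Fin n))}ᶜ ∧
    (∀ x : EuclideanSpace ℝ (Fin n), x ≠ 0 → ∀ v : EuclideanSpace ℝ (Fin n), v ≠ 0 →
      0 < iteratedFDeriv ℝ 2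
            (fun y => (1 / 2 : ℝ) * Real.sqrt (N y ^ 2 + ε * ‖y‖ ^ 2) ^ 2) x ![v, v]) := by
  have hN00 : N 0 = 0 := (hN0 0).mpr rfl
  have hNn : ∀ z, 0 ≤ N z := by
    intro z
    have h1 := hNt z (-z)
    have h2 : N (-z) = N z := by
      have := hNs (-1) z
      simpa using this
    have h3 : N (z + -z) = 0 := by simpa using hN00
    linarith
  refine ⟨?_, ?_, ?_, ?_, ?_⟩
  · intro x
    constructor
    · intro h
      by_contra hx
      have hxn : 0 < ‖x‖ := norm_pos_iff.mpr hx
      have h1 : 0 < N x ^ 2 + ε * ‖x‖ ^ 2 := by positivity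
      rw [Real.sqrt_eq_zero'] at h
      linarith
    · rintro rfl
      simp [hN00]
  · intro c x
    rw [hNs, norm_smul, Real.norm_eq_abs, mul_pow, mul_pow]
    rw [show |c|^2 * N x ^2 + ε * (|c|^2 * ‖x‖^2) = c^2 * (N x ^2 + ε * ‖x‖^2) by
      rw [sq_abs]; ring]
    rw [Real.sqrt_mul (by positivity), Real.sqrt_sq_eq_abs]
  · intro x y
    have h1 : N (x + y) ≤ N x + N y := hNt x y
    have h2 : ‖x + y‖ ≤ ‖x‖ + ‖y‖ := norm_add_le x y
    set a := N x; set b := ‖x‖; set a' := N y; set b' := ‖y‖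
    have ha : 0 ≤ a := hNn x
    have ha' : 0 ≤ a' := hNn y
    have hb : 0 ≤ b := norm_nonneg x
    have hb' : 0 ≤ b' := norm_nonneg y
    have step1 : Real.sqrt (N (x+y)^2 + ε*‖x+y‖^2) ≤
        Real.sqrt ((a+a')^2 + ε*(b+b')^2) := by
      apply Real.sqrt_le_sqrt
      have e1 : N (x+y)^2 ≤ (a+a')^2 := pow_le_pow_left₀ (hNn _) h1 2
      have e2 : ‖x+y‖^2 ≤ (b+b')^2 := pow_le_pow_left₀ (norm_nonneg _) h2 2
      nlinarith
    refine step1.trans ?_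
    set s := Real.sqrt (a^2 + ε*b^2) with hs
    set s' := Real.sqrt (a'^2 + ε*b'^2) with hs'
    have hsn : 0 ≤ s := Real.sqrt_nonneg _
    have hs'n : 0 ≤ s' := Real.sqrt_nonneg _
    have hss : s^2 = a^2 + ε*b^2 := Real.sq_sqrt (by positivity)
    have hss' : s'^2 = a'^2 + ε*b'^2 := Real.sq_sqrt (by positivity)
    have cross : a*a' + ε*(b*b') ≤ s * s' := by
      rw [hs, hs', ← Real.sqrt_mul (by positivity)]
      apply Real.le_sqrt_of_sq_le
      nlinarith [sq_nonneg (a*b' - a'*b)]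
    have goal2 : (a+a')^2 + ε*(b+b')^2 ≤ (s + s')^2 := by nlinarith
    calc Real.sqrt ((a+a')^2 + ε*(b+b')^2) ≤ Real.sqrt ((s+s')^2) := Real.sqrt_le_sqrt goal2
      _ = s + s' := Real.sqrt_sq (by positivity)
  · have heq : (fun x : EuclideanSpace ℝ (Fin n) => Real.sqrt (N x ^ 2 + ε * ‖x‖ ^ 2) ^ 2)
        = fun x => N x ^ 2 + ε * ‖x‖ ^ 2 := funext fun x => Real.sq_sqrt (by positivity)
    rw [heq]
    exact hNsm.add ((contDiff_const.mul (contDiff_norm_sq ℝ)).contDiffOn)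
  · intro x hx v hv
    have E := 0  -- dummy
    clear E
    set g : EuclideanSpace ℝ (Fin n) → ℝ := fun y => N y ^ 2 with hgdef
    have hfun : (fun y : EuclideanSpace ℝ (Fin n) => (1 / 2 : ℝ) * Real.sqrt (N y ^ 2 + ε * ‖y‖ ^ 2) ^ 2)
        = fun y => (1/2 : ℝ) * (g y + ε * ‖y‖ ^ 2) :=
      funext fun y => by rw [Real.sq_sqrt (by positivity)]
    rw [hfun]
    set f₀ : EuclideanSpace ℝ (Fin n) → ℝ := fun y => (1/2 : ℝ) * (g y + ε * ‖y‖ ^ 2) with hf₀def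
    have hopen : IsOpen (({(0 : EuclideanSpace ℝ (Fin n))}ᶜ : Set (EuclideanSpace ℝ (Fin n)))) := isOpen_compl_singleton
    have hxmem : x ∈ (({(0 : EuclideanSpace ℝ (Fin n))}ᶜ : Set (EuclideanSpace ℝ (Fin n)))) := by simp [hx]
    have hf₀ : ContDiffOn ℝ 2 f₀ (({(0 : EuclideanSpace ℝ (Fin n))}ᶜ : Set (EuclideanSpace ℝ (Fin n)))) :=
      contDiffOn_const.mul (hNsm.add ((contDiff_const.mul (contDiff_norm_sq ℝ)).contDiffOn))
    have hf₀x : ContDiffAt ℝ 2 f₀ x := hf₀.contDiffAt (hopen.mem_nhds hxmem)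
    set F' : EuclideanSpace ℝ (Fin n) → (EuclideanSpace ℝ (Fin n) →L[ℝ] ℝ) := fderiv ℝ f₀ with hF'def
    have hF'1 : ContDiffAt ℝ 1 F' x := hf₀x.fderiv_right (by norm_num)
    have hF'd : HasFDerivAt F' (fderiv ℝ F' x) x :=
      (hF'1.differentiableAt one_ne_zero).hasFDerivAt
    set L : ℝ → EuclideanSpace ℝ (Fin n) := fun t => x + t • v with hLdef
    have hL : ∀ t : ℝ, HasDerivAt L v t := fun t => by
      simpa [hLdef] using ((hasDerivAt_id t).smul_const v).const_add x
    have hLcont : Continuous L := by fun_prop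
    have hL0 : L 0 = x := by simp [hLdef]
    -- neighborhood where L t ≠ 0
    have hpre : L ⁻¹' (({(0 : EuclideanSpace ℝ (Fin n))}ᶜ : Set (EuclideanSpace ℝ (Fin n)))) ∈ 𝓝 (0:ℝ) :=
      (hopen.preimage hLcont).mem_nhds (by simp [hL0, hx])
    obtain ⟨δ, hδpos, hball⟩ := Metric.mem_nhds_iff.mp hpre
    set U : Set ℝ := Metric.ball (0:ℝ) δ with hUdef
    have hU : U ∈ 𝓝 (0:ℝ) := Metric.ball_mem_nhds 0 hδpos
    have hLt : ∀ t ∈ U, L t ≠ 0 := fun t ht => hball ht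
    -- derivative of g along the line
    have hgd : ∀ t ∈ U, DifferentiableAt ℝ g (L t) := fun t ht =>
      (hNsm.contDiffAt (hopen.mem_nhds (by simpa using hLt t ht))).differentiableAt two_ne_zero
    set ψ : ℝ → ℝ := fun s => (1/2 : ℝ) * g (L s) with hψdef
    have hdψ : ∀ t ∈ U, HasDerivAt ψ ((1/2 : ℝ) * (fderiv ℝ g (L t) v)) t := by
      intro t ht
      exact (((hgd t ht).hasFDerivAt.comp_hasDerivAt t (hL t))).const_mul (1/2 : ℝ)
    -- convexity of ψ
    have hψconv : ConvexOn ℝ (Set.univ : Set ℝ) ψ := by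
      refine ⟨convex_univ, fun s _ t _ a b ha hb hab => ?_⟩
      have hb' : b = 1 - a := by linarith
      subst hb'
      have hLe : L (a • s + (1-a) • t) = a • L s + (1-a) • L t := by
        simp only [hLdef, smul_eq_mul]
        module
      have h1 : N (L (a • s + (1-a) • t)) ≤ a * N (L s) + (1-a) * N (L t) := by
        rw [hLe]
        calc N (a • L s + (1-a) • L t) ≤ N (a • L s) + N ((1-a) • L t) := hNt _ _
          _ = a * N (L s) + (1-a) * N (L t) := by
              rw [hNs, hNs, abs_of_nonneg ha, abs_of_nonneg hb]
      have h2 : N (L (a • s + (1-a) • t)) ^ 2 ≤ (a * N (L s) + (1-a) * N (L t)) ^ 2 :=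
        pow_le_pow_left₀ (hNn _) h1 2
      have hgoal : (1/2:ℝ) * N (L (a • s + (1-a) • t)) ^ 2
          ≤ a * ((1/2:ℝ) * N (L s) ^ 2) + (1-a) * ((1/2:ℝ) * N (L t) ^ 2) := by
        nlinarith [h2, mul_nonneg ha hb, sq_nonneg (N (L s) - N (L t)), hNn (L s), hNn (L t)]
      show (1/2:ℝ) * g (L (a • s + (1-a) • t))
          ≤ a • ((1/2:ℝ) * g (L s)) + (1-a) • ((1/2:ℝ) * g (L t))
      rw [smul_eq_mul, smul_eq_mul]
      exact hgoal
    -- monotone derivative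
    set m : ℝ → ℝ := fun t => (1/2 : ℝ) * (fderiv ℝ g (L t) v) with hmdef
    have hmono : MonotoneOn m U := by
      have h1 := (hψconv.subset (Set.subset_univ U) (convex_ball 0 δ)).monotoneOn_deriv
        (fun t ht => (hdψ t ht).differentiableAt)
      intro p hp q hq hpq
      have := h1 hp hq hpq
      rwa [(hdψ p hp).deriv, (hdψ q hq).deriv] at this
    -- derivative of f₀ along the line, and key identity
    have hdφ : ∀ t ∈ U, HasDerivAt (fun s => f₀ (L s)) (F' (L t) v) t := by
      intro t ht
      have hdiff : DifferentiableAt ℝ f₀ (L t) :=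
        (hf₀.contDiffAt (hopen.mem_nhds (by simpa using hLt t ht))).differentiableAt two_ne_zero
      exact hdiff.hasFDerivAt.comp_hasDerivAt t (hL t)
    have hnorm : ∀ s : ℝ, ‖L s‖ ^ 2
        = ‖x‖ ^ 2 + 2 * (inner ℝ x v : ℝ) * s + ‖v‖ ^ 2 * s ^ 2 := by
      intro s
      simp only [hLdef]
      rw [norm_add_sq_real, real_inner_smul_right, norm_smul, Real.norm_eq_abs, mul_pow, sq_abs]
      ring
    have hkey : ∀ t ∈ U, F' (L t) v
        = m t + (ε * (inner ℝ x v : ℝ) + ε * ‖v‖ ^ 2 * t) := by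
      intro t ht
      have hq' : HasDerivAt
          (fun s : ℝ => (ε/2) * ‖x‖ ^ 2 + ε * (inner ℝ x v : ℝ) * s + (ε/2) * ‖v‖ ^ 2 * s ^ 2)
          (ε * (inner ℝ x v : ℝ) + ε * ‖v‖ ^ 2 * t) t := by
        have h1 : HasDerivAt (fun s : ℝ => s) 1 t := hasDerivAt_id t
        have h2 : HasDerivAt (fun s : ℝ => s ^ 2) (2 * t) t := by
          simpa using hasDerivAt_pow 2 t
        have := ((hasDerivAt_const t ((ε/2) * ‖x‖ ^ 2)).add
          (h1.const_mul (ε * (inner ℝ x v : ℝ)))).add (h2.const_mul ((ε/2) * ‖v‖ ^ 2))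
        simp only [Pi.add_def] at this
        exact this.congr_deriv (by ring)
      have h2 : HasDerivAt (fun s => f₀ (L s))
          (m t + (ε * (inner ℝ x v : ℝ) + ε * ‖v‖ ^ 2 * t)) t := by
        have hsum := (hdψ t ht).add hq'
        have hfe : (fun s => ψ s + ((ε/2) * ‖x‖ ^ 2 + ε * (inner ℝ x v : ℝ) * s
            + (ε/2) * ‖v‖ ^ 2 * s ^ 2)) = fun s => f₀ (L s) := by
          funext s
          simp only [hψdef, hf₀def]
          rw [hnorm s]
          ring
        simp only [Pi.add_def] at hsum
        rw [hfe] at hsum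
        have hmt : m t = (1/2:ℝ) * (fderiv ℝ g (L t) v) := rfl
        rw [hmt]
        exact hsum
      exact (hdφ t ht).unique h2
    -- derivative of t ↦ F' (L t) v at 0
    have hA : HasDerivAt (fun t => F' (L t)) (fderiv ℝ F' x v) 0 := by
      have hF'd0 : HasFDerivAt F' (fderiv ℝ F' x) (L 0) := hL0.symm ▸ hF'd
      exact hF'd0.comp_hasDerivAt 0 (hL 0)
    have hAv : HasDerivAt (fun t => F' (L t) v) (fderiv ℝ F' x v v) 0 := by
      have := hA.clm_apply (hasDerivAt_const (0:ℝ) v)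
      simpa [hL0] using this
    -- m has derivative A - ε‖v‖² at 0
    have hmA : HasDerivAt m (fderiv ℝ F' x v v - ε * ‖v‖ ^ 2) 0 := by
      have hrhs : HasDerivAt
          (fun t => F' (L t) v - (ε * (inner ℝ x v : ℝ) + ε * ‖v‖ ^ 2 * t))
          (fderiv ℝ F' x v v - ε * ‖v‖ ^ 2) 0 := by
        have hlin : HasDerivAt (fun t : ℝ => ε * (inner ℝ x v : ℝ) + ε * ‖v‖ ^ 2 * t)
            (ε * ‖v‖ ^ 2) 0 := by
          simpa [Pi.add_def] using (hasDerivAt_const (0:ℝ) (ε * (inner ℝ x v : ℝ))).add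
            ((hasDerivAt_id (0:ℝ)).const_mul (ε * ‖v‖ ^ 2))
        exact hAv.sub hlin
      apply hrhs.congr_of_eventuallyEq
      filter_upwards [hU] with t ht
      rw [hkey t ht]
      ring
    have hfinal : 0 ≤ fderiv ℝ F' x v v - ε * ‖v‖ ^ 2 := mono_deriv_nonneg hU hmono hmA
    have hvpos : 0 < ε * ‖v‖ ^ 2 := by
      have : 0 < ‖v‖ := norm_pos_iff.mpr hv
      positivity
    rw [iteratedFDeriv_two_apply]
    simp only [Matrix.cons_val_zero, Matrix.cons_val_one, Matrix.head_cons]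
    rw [← hF'def]
    linarith
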